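/- In the n-th Engel-type algebra, the line ℝX is the unique horizontal line (one-dimensional subspace of V_1) ℝν satisfying [ℝν, V_2] = {0}. -/

import Mathlib

abbrev EngelVec (n : ℕ) : Type := ℝ × (Fin n → ℝ) × (Fin n → ℝ) × ℝ
noncomputable def engelBracket (n : ℕ) (u v : EngelVec n) : EngelVec n :=
  (0, 0,
    fun i => u.2.1 i * v.1 - v.2.1 i * u.1,
    ∑ i : Fin n, (u.2.1 i * v.2.2.1 i - v.2.1 i * u.2.2.1 i))

noncomputable instance (n : ℕ) : LieRing (EngelVec n) :=
  { (inferInstance : AddCommGroup (EngelVec n)) with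
    bracket := engelBracket n
    add_lie := by
      intro x y z
      refine Prod.ext ?_ (Prod.ext ?_ (Prod.ext ?_ ?_)) <;>
        first
          | (simp [engelBracket]; done)
          | (funext i; simp [engelBracket]; done)
          | (funext i; simp [engelBracket]; ring)
          | (simp [engelBracket, mul_add, add_mul, Finset.sum_sub_distrib,
              Finset.sum_add_distrib]; ring)
    lie_add := by
      intro x y z
      refine Prod.ext ?_ (Prod.ext ?_ (Prod.ext ?_ ?_)) <;>
        first
          | (simp [engelBracket]; done)
          | (funext i; simp [engelBracket]; done)
          | (funext i; simp [engelBracket]; ring)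
          | (simp [engelBracket, mul_add, add_mul, Finset.sum_sub_distrib,
              Finset.sum_add_distrib]; ring)
    lie_self := by
      intro x
      refine Prod.ext ?_ (Prod.ext ?_ (Prod.ext ?_ ?_)) <;>
        first
          | (simp [engelBracket]; done)
          | (funext i; simp [engelBracket]; done)
          | (funext i; simp [engelBracket]; ring)
          | (simp [engelBracket]; ring)
    leibniz_lie := by
      intro x y z
      refine Prod.ext ?_ (Prod.ext ?_ (Prod.ext ?_ ?_)) <;>
        first
          | (simp [engelBracket]; done)
          | (funext i; simp [engelBracket]; done)
          | (funext i; simp [engelBracket]; ring)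
          | (simp [engelBracket, mul_sub, sub_mul, mul_comm, mul_left_comm,
              Finset.sum_sub_distrib]; ring) }

noncomputable instance (n : ℕ) : LieAlgebra ℝ (EngelVec n) :=
  { (inferInstance : Module ℝ (EngelVec n)) with
    lie_smul := by
      intro c x y
      refine Prod.ext ?_ (Prod.ext ?_ (Prod.ext ?_ ?_)) <;>
        first
          | (simp [Bracket.bracket, engelBracket]; done)
          | (funext i; simp [Bracket.bracket, engelBracket]; ring)
          | (simp [Bracket.bracket, engelBracket, mul_sub, mul_add, Finset.mul_sum,
              mul_comm, mul_left_comm, Finset.sum_sub_distrib];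
             exact Finset.sum_congr rfl fun i _ => by ring) }

noncomputable def engelX (n : ℕ) : EngelVec n := (1, 0, 0, 0)
noncomputable def engelY (n : ℕ) (i : Fin n) : EngelVec n := (0, Pi.single i 1, 0, 0)
noncomputable def engelT (n : ℕ) (i : Fin n) : EngelVec n := (0, 0, Pi.single i 1, 0)
noncomputable def engelZ (n : ℕ) : EngelVec n := (0, 0, 0, 1)

/-- The first layer `V₁ = span{X, Y₁, …, Yₙ}` of the `n`-th Engel-type algebra. -/
noncomputable def engelV1 (n : ℕ) : Submodule ℝ (EngelVec n) :=
  Submodule.span ℝ ({engelX n} ∪ Set.range (engelY n))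

/-- The second layer `V₂ = span{T₁, …, Tₙ}`. -/
noncomputable def engelV2 (n : ℕ) : Submodule ℝ (EngelVec n) :=
  Submodule.span ℝ (Set.range (engelT n))

/-- The third layer `V₃ = ℝZ`. -/
noncomputable def engelV3 (n : ℕ) : Submodule ℝ (EngelVec n) :=
  Submodule.span ℝ {engelZ n}

/-- The subspace `span{Y₁, …, Yₙ}` of the first layer. -/
noncomputable def engelYspan (n : ℕ) : Submodule ℝ (EngelVec n) :=
  Submodule.span ℝ (Set.range (engelY n))

/-- In the `n`-th Engel-type algebra, the line `ℝX` is the unique horizontal line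
(one-dimensional subspace of `V₁`) `ℝν` satisfying `[ℝν, V₂] = {0}`: a nonzero
`ν ∈ V₁` bracket-annihilates `V₂` if and only if `ν` is a multiple of `X`. -/
theorem engel_unique_line_commuting_with_V2 (n : ℕ) (ν : EngelVec n)
    (hν : ν ∈ engelV1 n) (hν0 : ν ≠ 0) :
    (∀ w ∈ engelV2 n, ⁅ν, w⁆ = (0 : EngelVec n)) ↔ ∃ a : ℝ, ν = a • engelX n := by
  -- ν ∈ V₁ implies its T- and Z-components vanish
  have hker : engelV1 n ≤ LinearMap.ker
      ((LinearMap.snd ℝ (Fin n → ℝ) ((Fin n → ℝ) × ℝ)).comp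
        (LinearMap.snd ℝ ℝ ((Fin n → ℝ) × (Fin n → ℝ) × ℝ))) := by
    rw [engelV1, Submodule.span_le]
    rintro v (rfl | ⟨i, rfl⟩) <;> simp [engelX, engelY, LinearMap.mem_ker]
  have hν22 : ν.2.2 = 0 := hker hν
  constructor
  · intro h
    refine ⟨ν.1, ?_⟩
    have hy : ∀ i : Fin n, ν.2.1 i = 0 := by
      intro i
      have hTi : engelT n i ∈ engelV2 n :=
        Submodule.subset_span ⟨i, rfl⟩
      have := congrArg (fun v : EngelVec n => v.2.2.2) (h _ hTi)
      simpa [Bracket.bracket, engelBracket, engelT, Pi.single_apply,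
        mul_comm] using this
    have hy' : ν.2.1 = 0 := funext hy
    refine Prod.ext ?_ (Prod.ext ?_ ?_) <;>
      simp [engelX, hy', hν22] <;> rfl
  · rintro ⟨a, rfl⟩ w hw
    have hker2 : engelV2 n ≤ LinearMap.ker
        ((LinearMap.fst ℝ (Fin n → ℝ) ((Fin n → ℝ) × ℝ)).comp
          (LinearMap.snd ℝ ℝ ((Fin n → ℝ) × (Fin n → ℝ) × ℝ))) := by
      rw [engelV2, Submodule.span_le]
      rintro v ⟨i, rfl⟩
      simp [engelT, LinearMap.mem_ker]
    have hw21 : w.2.1 = 0 := hker2 hw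
    refine Prod.ext ?_ (Prod.ext ?_ (Prod.ext ?_ ?_)) <;>
      simp only [Bracket.bracket, engelBracket, engelX, hw21, Prod.smul_fst,
        Prod.smul_snd, smul_eq_mul, mul_one, mul_zero, Pi.smul_apply, Pi.zero_apply,
        zero_mul, sub_zero, sub_self, Finset.sum_const_zero] <;>
      first
        | rfl
        | exact funext fun i => rfl
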